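/- Let g ≥ 1 and let B be a symmetric g×g complex matrix such that the real quadratic form m ↦ Re(⟨m, Bm⟩) is negative definite on ℝ^g. Then for every u ∈ ℂ^g, the family m ↦ exp((1/2)⟨m, Bm⟩ + ⟨m, u⟩) indexed by m ∈ ℤ^g is absolutely summable; that is, the Riemann theta series Θ(u; B) = Σ_{m∈ℤ^g} exp((1/2)⟨m, Bm⟩ + ⟨m, u⟩) converges absolutely. -/

import Mathlib

noncomputable section

open Complex Matrix

private lemma summable_exp_neg_abs_int : Summable (fun n : ℤ => Real.exp (-|(n : ℝ)|)) := by
  have hnat : Summable (fun n : ℕ => Real.exp (-(n : ℝ))) := by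
    have h := summable_geometric_of_lt_one (le_of_lt (Real.exp_pos (-1)))
      (Real.exp_lt_one_iff.mpr (by norm_num))
    convert h using 2 with n
    rw [← Real.exp_nat_mul]
    ring_nf
  apply Summable.of_nat_of_neg
  · convert hnat using 2 with n
    exacts [rfl, by simp]
  · convert hnat using 2 with n
    exacts [rfl, by simp]

private lemma summable_pi_prod {n : ℕ} {f : ℤ → ℝ} (hf : Summable f) (h0 : ∀ x, 0 ≤ f x) :
    Summable (fun m : Fin n → ℤ => ∏ k, f (m k)) := by
  induction n with
  | zero => exact Summable.of_finite
  | succ n ih =>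
    have h2 := hf.mul_of_nonneg ih (fun x => h0 x)
      (fun m => Finset.prod_nonneg fun k _ => h0 _)
    rw [← (Fin.consEquiv (fun _ : Fin (n + 1) => ℤ)).summable_iff]
    convert h2 using 1
    funext x
    simp only [Function.comp_apply, Fin.consEquiv_apply, Fin.prod_univ_succ, Fin.cons_zero,
      Fin.cons_succ]

set_option maxHeartbeats 1000000 in
theorem theta_series_converges (g : ℕ) (hg : 1 ≤ g)
    (B : Matrix (Fin g) (Fin g) ℂ) (hsym : B.transpose = B)
    (hneg : ∀ m : Fin g → ℝ, m ≠ 0 →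
      (dotProduct (fun k => (m k : ℂ)) (B.mulVec fun k => (m k : ℂ))).re < 0) :
    ∀ u : Fin g → ℂ,
      Summable (fun m : Fin g → ℤ =>
        ‖Complex.exp ((1 / 2 : ℂ) *
            dotProduct (fun k => ((m k : ℤ) : ℂ)) (B.mulVec fun k => ((m k : ℤ) : ℂ)) +
          dotProduct (fun k => ((m k : ℤ) : ℂ)) u)‖) := by
  intro u
  haveI : Nonempty (Fin g) := ⟨⟨0, hg⟩⟩
  set C : ℝ := ∑ k, ‖u k‖ with hC
  set q : (Fin g → ℝ) → ℝ := fun v => ∑ i, v i * ∑ j, (B i j).re * v j with hqdef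
  -- the real part of the complex quadratic form
  have hre : ∀ v : Fin g → ℝ,
      (dotProduct (fun k => (v k : ℂ)) (B.mulVec fun k => (v k : ℂ))).re = q v := by
    intro v
    simp only [dotProduct, Matrix.mulVec, hqdef, Complex.re_sum, Complex.mul_re,
      Complex.ofReal_re, Complex.ofReal_im, Complex.im_sum, Complex.mul_im, mul_zero, zero_mul,
      add_zero, sub_zero, zero_sub]
  -- continuity of q
  have hqc : Continuous q := by
    apply continuous_finset_sum
    intro i _
    exact (continuous_apply i).mul
      (continuous_finset_sum _ fun j _ => continuous_const.mul (continuous_apply j))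
  -- homogeneity of q
  have hqh : ∀ (c : ℝ) (v : Fin g → ℝ), q (fun k => c * v k) = c ^ 2 * q v := by
    intro c v
    simp only [hqdef]
    rw [Finset.mul_sum]
    refine Finset.sum_congr rfl fun i _ => ?_
    have h : ∑ j, (B i j).re * (c * v j) = c * ∑ j, (B i j).re * v j := by
      rw [Finset.mul_sum]
      exact Finset.sum_congr rfl fun j _ => by ring
    rw [h]; ring
  -- compactness argument
  obtain ⟨v0, hv0, hmax⟩ := (isCompact_sphere (0 : Fin g → ℝ) 1).exists_isMaxOn
    (NormedSpace.sphere_nonempty.mpr zero_le_one) hqc.continuousOn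
  set ε : ℝ := -(q v0) with hεdef
  have hv0n : ‖v0‖ = 1 := by simpa using hv0
  have hε : 0 < ε := by
    have hv0ne : v0 ≠ 0 := by
      intro h; rw [h] at hv0n; simp at hv0n
    have := hneg v0 hv0ne
    rw [hre] at this
    linarith
  have hquad : ∀ v : Fin g → ℝ, q v ≤ -ε * ‖v‖ ^ 2 := by
    intro v
    rcases eq_or_ne v 0 with rfl | hv
    · simp [hqdef]
    · have hn : (0:ℝ) < ‖v‖ := norm_pos_iff.mpr hv
      have hw : (fun k => ‖v‖⁻¹ * v k) ∈ Metric.sphere (0 : Fin g → ℝ) 1 := by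
        have : (fun k => ‖v‖⁻¹ * v k) = ‖v‖⁻¹ • v := by funext k; simp
        rw [this]
        simp [norm_smul, abs_of_pos (inv_pos.mpr hn), inv_mul_cancel₀ hn.ne']
      have h1 : q (fun k => ‖v‖⁻¹ * v k) ≤ -ε := by
        have := hmax hw; simpa [hεdef] using this
      have h2 := hqh (‖v‖⁻¹) v
      rw [h2] at h1
      have h3 : (‖v‖⁻¹) ^ 2 * ‖v‖ ^ 2 = 1 := by
        field_simp
      have h4 : q v = q v * ‖v‖⁻¹ ^ 2 * ‖v‖ ^ 2 := by rw [mul_assoc, h3, mul_one]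
      rw [h4]
      calc q v * ‖v‖⁻¹ ^ 2 * ‖v‖ ^ 2 = (‖v‖⁻¹ ^ 2 * q v) * ‖v‖ ^ 2 := by ring
        _ ≤ -ε * ‖v‖ ^ 2 := mul_le_mul_of_nonneg_right h1 (sq_nonneg _)
  -- linear part estimate
  have hlin : ∀ v : Fin g → ℝ, (dotProduct (fun k => (v k : ℂ)) u).re ≤ C * ‖v‖ := by
    intro v
    rw [dotProduct, Complex.re_sum]
    have : ∀ k ∈ Finset.univ, ((v k : ℂ) * u k).re ≤ ‖u k‖ * ‖v‖ := by
      intro k _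
      calc ((v k : ℂ) * u k).re ≤ ‖(v k : ℂ) * u k‖ := Complex.re_le_norm _
        _ = |v k| * ‖u k‖ := by rw [norm_mul]; simp [Real.norm_eq_abs]
        _ ≤ ‖v‖ * ‖u k‖ := by
            apply mul_le_mul_of_nonneg_right _ (norm_nonneg _)
            simpa [Real.norm_eq_abs] using norm_le_pi_norm v k
        _ = ‖u k‖ * ‖v‖ := mul_comm _ _
    calc ∑ k, ((v k : ℂ) * u k).re ≤ ∑ k, ‖u k‖ * ‖v‖ := Finset.sum_le_sum this
      _ = C * ‖v‖ := by rw [hC, Finset.sum_mul]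
  -- the majorant constant
  set K : ℝ := (C + g) ^ 2 / (2 * ε) with hK
  -- the key pointwise bound
  have hbound : ∀ m : Fin g → ℤ,
      ‖Complex.exp ((1 / 2 : ℂ) *
            dotProduct (fun k => ((m k : ℤ) : ℂ)) (B.mulVec fun k => ((m k : ℤ) : ℂ)) +
          dotProduct (fun k => ((m k : ℤ) : ℂ)) u)‖
        ≤ Real.exp K * ∏ k, Real.exp (-|((m k : ℤ) : ℝ)|) := by
    intro m
    set v : Fin g → ℝ := fun k => ((m k : ℤ) : ℝ) with hv
    have hcast : (fun k => ((m k : ℤ) : ℂ)) = fun k => ((v k : ℝ) : ℂ) := by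
      funext k; simp [hv]
    rw [Complex.norm_exp]
    have hre2 : ((1 / 2 : ℂ) *
            dotProduct (fun k => ((m k : ℤ) : ℂ)) (B.mulVec fun k => ((m k : ℤ) : ℂ)) +
          dotProduct (fun k => ((m k : ℤ) : ℂ)) u).re
        = (1 / 2) * q v + (dotProduct (fun k => ((v k : ℝ) : ℂ)) u).re := by
      rw [hcast, Complex.add_re, Complex.mul_re, hre v]
      norm_num
    rw [hre2]
    have hsum_le : ∑ k, |v k| ≤ (g : ℝ) * ‖v‖ := by
      calc ∑ k, |v k| ≤ ∑ _k : Fin g, ‖v‖ := by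
            apply Finset.sum_le_sum
            intro k _
            simpa [Real.norm_eq_abs] using norm_le_pi_norm v k
        _ = (g : ℝ) * ‖v‖ := by simp [mul_comm]
    have ht : (0:ℝ) ≤ ‖v‖ := norm_nonneg _
    have hre3 : (1 / 2) * q v + (dotProduct (fun k => ((v k : ℝ) : ℂ)) u).re
        ≤ K - ∑ k, |v k| := by
      have h1 := hquad v
      have h2 := hlin v
      have hkey : -(ε/2) * ‖v‖ ^ 2 + (C + g) * ‖v‖ ≤ K := by
        rw [hK, le_div_iff₀ (by positivity)]
        have hid : (-(ε / 2) * ‖v‖ ^ 2 + (C + (g:ℝ)) * ‖v‖) * (2 * ε)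
            = (C + (g:ℝ)) ^ 2 - (ε * ‖v‖ - (C + (g:ℝ))) ^ 2 := by ring
        rw [hid]
        linarith [sq_nonneg (ε * ‖v‖ - (C + (g:ℝ)))]
      nlinarith
    calc Real.exp ((1 / 2) * q v + (dotProduct (fun k => ((v k : ℝ) : ℂ)) u).re)
        ≤ Real.exp (K - ∑ k, |v k|) := Real.exp_le_exp.mpr hre3
      _ = Real.exp K * ∏ k, Real.exp (-|v k|) := by
          rw [sub_eq_add_neg, Real.exp_add]
          congr 1
          rw [← Real.exp_sum]
          congr 1
          rw [Finset.sum_neg_distrib]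
  -- the majorant is summable
  have hmaj : Summable (fun m : Fin g → ℤ =>
      Real.exp K * ∏ k, Real.exp (-|((m k : ℤ) : ℝ)|)) := by
    have h := summable_pi_prod (n := g) (f := fun x : ℤ => Real.exp (-|(x : ℝ)|))
      summable_exp_neg_abs_int (fun x => (Real.exp_pos _).le)
    exact h.mul_left _
  exact Summable.of_nonneg_of_le (fun m => norm_nonneg _) hbound hmaj
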